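/- If w ∈ ℝ^p is a standard Gaussian random vector, then for any u, v ∈ ℝ^p, E[cos(⟨w,u⟩)cos(⟨w,v⟩) + sin(⟨w,u⟩)sin(⟨w,v⟩)] = exp(−‖u − v‖²/2). -/

import Mathlib

open MeasureTheory ProbabilityTheory Real Complex
open scoped NNReal ENNReal

noncomputable section

lemma gauss_charFun (c : ℝ) :
    ∫ x : ℝ, Complex.exp (c * x * Complex.I) ∂(gaussianReal 0 1) =
      Complex.exp (-(c:ℂ)^2/2) := by
  rw [gaussianReal_of_var_ne_zero 0 one_ne_zero]
  have hd : (gaussianPDF 0 1) = fun x => ((Real.toNNReal (gaussianPDFReal 0 1 x) : ℝ≥0) : ℝ≥0∞) := by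
    ext x; rfl
  rw [hd, integral_withDensity_eq_integral_smul
    ((measurable_gaussianPDFReal 0 1).real_toNNReal)]
  have h1 : ∀ x : ℝ, (Real.toNNReal (gaussianPDFReal 0 1 x) : ℝ≥0) • Complex.exp (c * x * Complex.I)
      = ((√(2 * π))⁻¹ : ℂ) * Complex.exp (-(1/2 : ℂ) * x ^ 2 + (c * Complex.I) * x + 0) := by
    intro x
    have hnn := gaussianPDFReal_nonneg 0 1 x
    rw [NNReal.smul_def, Real.coe_toNNReal _ hnn]
    rw [gaussianPDFReal]
    push_cast
    rw [Complex.real_smul]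
    push_cast
    simp only [mul_one, sub_zero]
    rw [mul_assoc, ← Complex.exp_add]
    congr 1
    ring
  simp_rw [h1]
  rw [integral_const_mul, integral_cexp_quadratic (by norm_num) (c * Complex.I) 0]
  have h2 : ((π : ℂ) / -(-(1/2 : ℂ))) ^ (1 / 2 : ℂ) = ((√(2 * π) : ℝ) : ℂ) := by
    rw [Real.sqrt_eq_rpow, Complex.ofReal_cpow (by positivity)]
    push_cast
    norm_num
    congr 1
    ring
  rw [h2]
  have h3 : ((√(2 * π) : ℝ) : ℂ) ≠ 0 := by
    simp only [ne_eq, Complex.ofReal_eq_zero]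
    positivity
  rw [← mul_assoc, inv_mul_cancel₀ h3, one_mul]
  congr 1
  have : (c * Complex.I) ^ 2 = -(c:ℂ)^2 := by
    rw [mul_pow, Complex.I_sq]; ring
  rw [this]
  ring

theorem stmt_10 (p : ℕ) (u v : Fin p → ℝ) :
    ∫ w : Fin p → ℝ,
        (Real.cos (∑ j, w j * u j) * Real.cos (∑ j, w j * v j) +
          Real.sin (∑ j, w j * u j) * Real.sin (∑ j, w j * v j))
        ∂(Measure.pi fun _ : Fin p => gaussianReal 0 1) =
      Real.exp (-(∑ j, (u j - v j) ^ 2) / 2) := by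
  set c : Fin p → ℝ := fun j => u j - v j with hc
  -- step 1: rewrite integrand as real part of complex exponential
  have hre : ∀ w : Fin p → ℝ,
      Real.cos (∑ j, w j * u j) * Real.cos (∑ j, w j * v j) +
        Real.sin (∑ j, w j * u j) * Real.sin (∑ j, w j * v j) =
      (Complex.exp ((∑ j, c j * w j : ℝ) * Complex.I)).re := by
    intro w
    rw [Complex.exp_ofReal_mul_I_re, ← Real.cos_sub]
    congr 1
    rw [← Finset.sum_sub_distrib]
    apply Finset.sum_congr rfl
    intro j _
    simp [hc]; ring
  simp_rw [hre]
  -- integrability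
  letI : MeasureSpace ℝ := ⟨gaussianReal 0 1⟩
  haveI : IsProbabilityMeasure (volume : Measure ℝ) :=
    inferInstanceAs (IsProbabilityMeasure (gaussianReal 0 1))
  haveI : SigmaFinite (volume : Measure ℝ) := inferInstance
  have hvol : (Measure.pi fun _ : Fin p => gaussianReal 0 1) =
      (volume : Measure (Fin p → ℝ)) := rfl
  have hmeas : ∀ j : Fin p, Integrable (fun x : ℝ => Complex.exp (c j * x * Complex.I)) := by
    intro j
    apply Integrable.mono' (integrable_const (1 : ℝ))
    · exact (Complex.continuous_exp.comp (by continuity)).aestronglyMeasurable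
    · filter_upwards with x
      rw [show ((c j : ℂ) * x * Complex.I) = ((c j * x : ℝ) : ℂ) * Complex.I by push_cast; ring]
      rw [Complex.norm_exp_ofReal_mul_I]
  have hint : Integrable (fun w : Fin p → ℝ =>
      Complex.exp ((∑ j, c j * w j : ℝ) * Complex.I))
      (Measure.pi fun _ : Fin p => gaussianReal 0 1) := by
    rw [hvol]
    have : (fun w : Fin p → ℝ => Complex.exp ((∑ j, c j * w j : ℝ) * Complex.I)) =
        fun w : Fin p → ℝ => ∏ j, Complex.exp (c j * w j * Complex.I) := by
      funext w
      rw [← Complex.exp_sum]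
      congr 1
      push_cast
      rw [Finset.sum_mul]
    rw [this]
    exact Integrable.fintype_prod_dep hmeas
  simp_rw [← RCLike.re_to_complex]
  rw [integral_re hint]
  simp only [RCLike.re_to_complex]
  -- compute the complex integral
  have hprod : ∫ w : Fin p → ℝ, Complex.exp ((∑ j, c j * w j : ℝ) * Complex.I)
      ∂(Measure.pi fun _ : Fin p => gaussianReal 0 1) =
      Complex.exp (-(∑ j, (c j : ℂ)^2)/2) := by
    rw [hvol]
    have h1 : (fun w : Fin p → ℝ => Complex.exp ((∑ j, c j * w j : ℝ) * Complex.I)) =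
        fun w : Fin p → ℝ => ∏ j, (fun x : ℝ => Complex.exp (c j * x * Complex.I)) (w j) := by
      funext w
      rw [← Complex.exp_sum]
      congr 1
      push_cast
      rw [Finset.sum_mul]
    rw [h1]
    beta_reduce
    erw [integral_fintype_prod_eq_prod (μ := fun _ => (volume : Measure ℝ))
      (fun j (x : ℝ) => Complex.exp (c j * x * Complex.I))]
    have h2 : ∀ j : Fin p, (∫ x : ℝ, Complex.exp (c j * x * Complex.I)) =
        Complex.exp (-(c j : ℂ)^2/2) := fun j => gauss_charFun (c j)
    simp_rw [h2, ← Complex.exp_sum]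
    congr 1
    rw [← Finset.sum_div, ← Finset.sum_neg_distrib]
  rw [hprod]
  rw [show -(∑ j, (c j : ℂ)^2)/2 = ((-(∑ j, (c j)^2)/2 : ℝ) : ℂ) by push_cast; ring]
  rw [← Complex.ofReal_exp, Complex.ofReal_re]
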